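/- Let X be a type of variables and V, V' types of values. Let p : (X → Set V') → (X → Set V') be contracting, let φ be a view from V to V', and let d be a domain over V. Then the derived propagator φ̂(p) is subsumed by d if and only if p is subsumed by φ d; that is: (for every domain d' over V with d' x ⊆ d x for all x, φ̂(p) d' = d') if and only if (for every domain d'' over V' with d'' x ⊆ (φ d) x for all x, p d'' = d''). -/

import Mathlib

/-- The derived propagator is subsumed by `d` iff `p` is subsumed by `φ d`. -/
theorem derived_subsumption {X V V' : Type*}
    (p : (X → Set V') → (X → Set V'))
    (hcontr : ∀ d x, p d x ⊆ d x)
    (φ : X → V → V') (hφ : ∀ x, Function.Injective (φ x))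
    (d : X → Set V) :
    (∀ d' : X → Set V, (∀ x, d' x ⊆ d x) →
        (fun x => (φ x) ⁻¹' (p (fun y => φ y '' d' y) x)) = d') ↔
    (∀ d'' : X → Set V', (∀ x, d'' x ⊆ φ x '' d x) → p d'' = d'') := by
  constructor
  · intro h d'' hsub
    set d' : X → Set V := fun x => (φ x) ⁻¹' (d'' x) with hd'
    have himg : (fun y => φ y '' d' y) = d'' := by
      funext x
      apply Set.Subset.antisymm
      · rintro v' ⟨v, hv, rfl⟩; exact hv
      · intro v' hv'
        obtain ⟨v, _, rfl⟩ := hsub x hv'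
        exact ⟨v, hv', rfl⟩
    have hsub' : ∀ x, d' x ⊆ d x := by
      intro x v hv
      obtain ⟨w, hw, hwe⟩ := hsub x hv
      rwa [← hφ x hwe]
    have := h d' hsub'
    funext x
    apply Set.Subset.antisymm (hcontr d'' x)
    intro v' hv'
    obtain ⟨v, hvd, rfl⟩ := hsub x hv'
    have hvd' : v ∈ d' x := hv'
    rw [← this] at hvd'
    simpa [himg] using hvd'
  · intro h d' hsub
    have h2 := h (fun y => φ y '' d' y) (fun x => Set.image_mono (hsub x))
    funext x
    rw [congrFun h2 x]
    exact Set.preimage_image_eq _ (hφ x)
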